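/- Let D ⊆ ℝ^d be open, A: D → M_d(ℝ) continuous, and F: D → ℝ^d locally essentially bounded. Then the Filippov set-valued map of the product satisfies K[AF](x) = A(x)·K[F](x) for every x ∈ D. -/

import Mathlib

open MeasureTheory

/-- The Filippov set-valued map of a vector field `F` on a domain `D ⊆ ℝ^d`:
`K[F](x) := ⋂_{δ>0} ⋂_{|N|=0} cl conv F((B_δ(x) ∩ D) \ N)`. -/
noncomputable def Filippov {d : ℕ} (D : Set (EuclideanSpace ℝ (Fin d)))
    (F : EuclideanSpace ℝ (Fin d) → EuclideanSpace ℝ (Fin d))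
    (x : EuclideanSpace ℝ (Fin d)) : Set (EuclideanSpace ℝ (Fin d)) :=
  ⋂ (δ : ℝ) (_ : 0 < δ), ⋂ (N : Set (EuclideanSpace ℝ (Fin d))) (_ : volume N = 0),
    closure (convexHull ℝ (F '' ((Metric.ball x δ ∩ D) \ N)))

/-- Approximation lemma: if `G` is uniformly within `r` of a function `H`
taking values in a convex set `T` on `s`, then the closed convex hull of `G '' s`
is contained in the closed `r`-thickening of `T`. -/
lemma approx_subset_cthickening {E : Type*} [NormedAddCommGroup E] [NormedSpace ℝ E]
    {α : Type*} (s : Set α) (G H : α → E) (r : ℝ) (T : Set E) (hT : Convex ℝ T)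
    (hH : ∀ y ∈ s, H y ∈ T) (hd : ∀ y ∈ s, dist (G y) (H y) ≤ r) :
    closure (convexHull ℝ (G '' s)) ⊆ Metric.cthickening r T := by
  apply closure_minimal _ Metric.isClosed_cthickening
  apply convexHull_min _ (hT.cthickening r)
  rintro _ ⟨y, hy, rfl⟩
  exact Metric.mem_cthickening_of_dist_le _ _ _ _ (hH y hy) (hd y hy)

/-- Membership in a closed set from membership in all its positive cthickenings. -/
lemma mem_of_mem_cthickening {E : Type*} [NormedAddCommGroup E] {T : Set E}
    (hT : IsClosed T) {w : E} (h : ∀ r > (0:ℝ), w ∈ Metric.cthickening r T) : w ∈ T := by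
  have : w ∈ closure T := by
    rw [Metric.closure_eq_iInter_cthickening]
    exact Set.mem_iInter₂.mpr h
  rwa [hT.closure_eq] at this

/-- If `D ⊆ ℝ^d` is open, `A : D → M_d(ℝ)` is continuous and `F : D → ℝ^d` is locally
essentially bounded, then `K[AF](x) = A(x) · K[F](x)` for every `x ∈ D`. -/
theorem stmt8 {d : ℕ} (D : Set (EuclideanSpace ℝ (Fin d))) (hD : IsOpen D)
    (A : EuclideanSpace ℝ (Fin d) →
      (EuclideanSpace ℝ (Fin d) →L[ℝ] EuclideanSpace ℝ (Fin d)))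
    (hA : ContinuousOn A D)
    (F : EuclideanSpace ℝ (Fin d) → EuclideanSpace ℝ (Fin d))
    (hFbdd : ∀ x ∈ D, ∃ δ > (0:ℝ), ∃ C : ℝ,
      ∀ᵐ y ∂volume, y ∈ Metric.ball x δ ∩ D → ‖F y‖ ≤ C) :
    ∀ x ∈ D, Filippov D (fun y => A y (F y)) x = (fun u => A x u) '' Filippov D F x := by
  intro x hx
  classical
  obtain ⟨δ₀, hδ₀, C₀, hC₀⟩ := hFbdd x hx
  set C : ℝ := max C₀ 1 with hCdef
  have hCpos : (0:ℝ) < C := lt_of_lt_of_le one_pos (le_max_right _ _)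
  set bad : Set (EuclideanSpace ℝ (Fin d)) := {y | ¬ (y ∈ Metric.ball x δ₀ ∩ D → ‖F y‖ ≤ C₀)} with hbaddef
  have hbad : volume bad = 0 := ae_iff.mp hC₀
  set S : ℝ → Set (EuclideanSpace ℝ (Fin d)) → Set (EuclideanSpace ℝ (Fin d)) := fun δ N => (Metric.ball x δ ∩ D) \ N with hSdef
  set V : ℝ → Set (EuclideanSpace ℝ (Fin d)) → Set (EuclideanSpace ℝ (Fin d)) := fun δ N => closure (convexHull ℝ (F '' S δ N)) with hVdef
  -- monotonicity
  have hSmono : ∀ {δ₁ δ₂ : ℝ}, δ₁ ≤ δ₂ → ∀ {N₁ N₂ : Set (EuclideanSpace ℝ (Fin d))}, N₂ ⊆ N₁ →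
      S δ₁ N₁ ⊆ S δ₂ N₂ := by
    intro δ₁ δ₂ hδ N₁ N₂ hN
    exact Set.diff_subset_diff
      (Set.inter_subset_inter_left _ (Metric.ball_subset_ball hδ)) hN
  have hVmono : ∀ {δ₁ δ₂ : ℝ}, δ₁ ≤ δ₂ → ∀ {N₁ N₂ : Set (EuclideanSpace ℝ (Fin d))}, N₂ ⊆ N₁ →
      V δ₁ N₁ ⊆ V δ₂ N₂ := by
    intro δ₁ δ₂ hδ N₁ N₂ hN
    exact closure_mono (convexHull_mono (Set.image_mono (hSmono hδ hN)))
  -- nonemptiness of the sets S δ N for null N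
  have hSne : ∀ δ : ℝ, 0 < δ → ∀ N : Set (EuclideanSpace ℝ (Fin d)), volume N = 0 → (S δ N).Nonempty := by
    intro δ hδ N hN
    have hopen : IsOpen (Metric.ball x δ ∩ D) := Metric.isOpen_ball.inter hD
    have hpos : 0 < volume (Metric.ball x δ ∩ D) :=
      hopen.measure_pos volume ⟨x, Metric.mem_ball_self hδ, hx⟩
    by_contra h
    rw [Set.not_nonempty_iff_eq_empty, Set.diff_eq_empty] at h
    exact absurd (le_antisymm ((measure_mono h).trans hN.le) zero_le) hpos.ne'
  -- the essential bound
  have hFle : ∀ δ' : ℝ, δ' ≤ δ₀ → ∀ N : Set (EuclideanSpace ℝ (Fin d)), ∀ y ∈ S δ' (N ∪ bad), ‖F y‖ ≤ C := by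
    intro δ' hδ' N y hy
    have h1 : y ∈ Metric.ball x δ₀ ∩ D :=
      ⟨Metric.mem_ball.mpr (lt_of_lt_of_le (Metric.mem_ball.mp hy.1.1) hδ'), hy.1.2⟩
    have h2 : y ∉ bad := fun h => hy.2 (Set.mem_union_right _ h)
    have h3 : y ∈ Metric.ball x δ₀ ∩ D → ‖F y‖ ≤ C₀ := not_not.mp h2
    exact (h3 h1).trans (le_max_left _ _)
  -- compactness of the truncated convex hulls
  have hVsub : ∀ δ' : ℝ, δ' ≤ δ₀ → ∀ N : Set (EuclideanSpace ℝ (Fin d)),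
      V δ' (N ∪ bad) ⊆ Metric.closedBall 0 C := by
    intro δ' hδ' N
    apply closure_minimal _ Metric.isClosed_closedBall
    apply convexHull_min _ (convex_closedBall _ _)
    rintro _ ⟨y, hy, rfl⟩
    simpa [Metric.mem_closedBall, dist_zero_right] using hFle δ' hδ' N y hy
  have hVcpt : ∀ δ' : ℝ, δ' ≤ δ₀ → ∀ N : Set (EuclideanSpace ℝ (Fin d)), IsCompact (V δ' (N ∪ bad)) := by
    intro δ' hδ' N
    exact (isCompact_closedBall _ _).of_isClosed_subset isClosed_closure (hVsub δ' hδ' N)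
  -- continuity modulus of A at x
  have hAx : ContinuousAt A x := hA.continuousAt (hD.mem_nhds hx)
  have hmod : ∀ ε : ℝ, 0 < ε → ∃ δ' : ℝ, 0 < δ' ∧ δ' ≤ δ₀ ∧
      ∀ y ∈ Metric.ball x δ', ‖A y - A x‖ ≤ ε := by
    intro ε hε
    obtain ⟨δ', hδ'pos, h⟩ := Metric.continuousAt_iff.mp hAx ε hε
    refine ⟨min δ' δ₀, lt_min hδ'pos hδ₀, min_le_right _ _, fun y hy => ?_⟩
    have h2 : dist (A y) (A x) < ε :=
      h (lt_of_lt_of_le (Metric.mem_ball.mp hy) (min_le_left _ _))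
    rw [dist_eq_norm] at h2
    exact h2.le
  -- pointwise error bound
  have herr : ∀ ε : ℝ, ∀ y : (EuclideanSpace ℝ (Fin d)), ‖F y‖ ≤ C → ‖A y - A x‖ ≤ ε →
      dist (A x (F y)) (A y (F y)) ≤ ε * C := by
    intro ε y hF hAy
    rw [dist_eq_norm]
    have : A x (F y) - A y (F y) = (A x - A y) (F y) := by
      simp [ContinuousLinearMap.sub_apply]
    rw [this]
    calc ‖(A x - A y) (F y)‖ ≤ ‖A x - A y‖ * ‖F y‖ := (A x - A y).le_opNorm _
      _ ≤ ε * C := by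
          apply mul_le_mul _ hF (norm_nonneg _)
            (le_trans (norm_nonneg _) ((norm_sub_rev (A x) (A y)) ▸ hAy))
          rw [norm_sub_rev]; exact hAy
  ext w
  constructor
  · -- `⊆` : w ∈ K[AF](x) → w ∈ A(x) '' K[F](x)
    intro hw
    simp only [Filippov, Set.mem_iInter] at hw
    -- Step 1: w ∈ A x '' V δ' (N ∪ bad) for all small δ' and null N
    have step1 : ∀ δ' : ℝ, 0 < δ' → δ' ≤ δ₀ → ∀ N : Set (EuclideanSpace ℝ (Fin d)), volume N = 0 →
        w ∈ (fun u => A x u) '' V δ' (N ∪ bad) := by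
      intro δ' hδ'pos hδ'le N hN
      set T := (fun u => A x u) '' V δ' (N ∪ bad) with hTdef
      have hTcpt : IsCompact T := (hVcpt δ' hδ'le N).image (A x).continuous
      have hTconv : Convex ℝ T :=
        ((convex_convexHull ℝ _).closure).linear_image (A x : (EuclideanSpace ℝ (Fin d)) →ₗ[ℝ] (EuclideanSpace ℝ (Fin d)))
      apply mem_of_mem_cthickening hTcpt.isClosed
      intro r hr
      obtain ⟨δ'', hδ''pos, hδ''le, hmodb⟩ := hmod (r / C) (div_pos hr hCpos)
      set δ₁ := min δ'' δ' with hδ₁def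
      have hN' : volume (N ∪ bad) = 0 := measure_union_null hN hbad
      have hw1 : w ∈ closure (convexHull ℝ
          ((fun y => A y (F y)) '' S δ₁ (N ∪ bad))) :=
        hw δ₁ (lt_min hδ''pos hδ'pos) (N ∪ bad) hN'
      have hsub : closure (convexHull ℝ ((fun y => A y (F y)) '' S δ₁ (N ∪ bad))) ⊆
          Metric.cthickening (r / C * C) T := by
        apply approx_subset_cthickening _ _ (fun y => A x (F y)) _ _ hTconv
        · intro y hy
          exact ⟨F y, subset_closure (subset_convexHull ℝ _
            (Set.mem_image_of_mem F (hSmono (min_le_right _ _) (le_refl _) hy))), rfl⟩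
        · intro y hy
          rw [dist_comm]
          exact herr _ y (hFle δ₁ (le_trans (min_le_left _ _) hδ''le) N y hy)
            (hmodb y (Metric.mem_ball.mpr
              (lt_of_lt_of_le (Metric.mem_ball.mp hy.1.1) (min_le_left _ _))))
      have := hsub hw1
      rwa [div_mul_cancel₀ r hCpos.ne'] at this
    -- Step 2: directed intersection argument
    let ι := {p : ℝ × Set (EuclideanSpace ℝ (Fin d)) // 0 < p.1 ∧ p.1 ≤ δ₀ ∧ volume p.2 = 0}
    have hιne : Nonempty ι := ⟨⟨(δ₀, ∅), hδ₀, le_refl _, measure_empty⟩⟩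
    let t : ι → Set (EuclideanSpace ℝ (Fin d)) := fun p => V p.1.1 (p.1.2 ∪ bad) ∩ (fun u => A x u) ⁻¹' {w}
    have htcl : ∀ p, IsClosed (t p) :=
      fun p => isClosed_closure.inter (isClosed_singleton.preimage (A x).continuous)
    have htcpt : ∀ p, IsCompact (t p) := fun p =>
      (hVcpt p.1.1 p.2.2.1 p.1.2).inter_right
        (isClosed_singleton.preimage (A x).continuous)
    have htne : ∀ p, (t p).Nonempty := by
      intro p
      obtain ⟨v, hv, hvw⟩ := step1 p.1.1 p.2.1 p.2.2.1 p.1.2 p.2.2.2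
      exact ⟨v, hv, hvw⟩
    have htdir : Directed (· ⊇ ·) t := by
      intro p q
      refine ⟨⟨(min p.1.1 q.1.1, p.1.2 ∪ q.1.2), lt_min p.2.1 q.2.1,
        le_trans (min_le_left _ _) p.2.2.1,
        measure_union_null p.2.2.2 q.2.2.2⟩, ?_, ?_⟩
      · exact Set.inter_subset_inter_left _ (hVmono (min_le_left _ _)
          (Set.union_subset_union_left _ Set.subset_union_left))
      · exact Set.inter_subset_inter_left _ (hVmono (min_le_right _ _)
          (Set.union_subset_union_left _ Set.subset_union_right))
    obtain ⟨v, hv⟩ :=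
      IsCompact.nonempty_iInter_of_directed_nonempty_isCompact_isClosed t htdir htne
        htcpt htcl
    simp only [Set.mem_iInter] at hv
    have hvw : A x v = w := (hv ⟨(δ₀, ∅), hδ₀, le_refl _, measure_empty⟩).2
    refine ⟨v, ?_, hvw⟩
    simp only [Filippov, Set.mem_iInter]
    intro δ hδ N hN
    have := (hv ⟨(min δ δ₀, N), lt_min hδ hδ₀, min_le_right _ _, hN⟩).1
    exact hVmono (min_le_left δ δ₀) Set.subset_union_left this
  · -- `⊇` : A x v ∈ K[AF](x) for v ∈ K[F](x)
    rintro ⟨v, hv, rfl⟩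
    simp only [Filippov, Set.mem_iInter] at hv ⊢
    intro δ hδ N hN
    set T := closure (convexHull ℝ ((fun y => A y (F y)) '' S δ N)) with hTdef
    apply mem_of_mem_cthickening isClosed_closure
    intro r hr
    obtain ⟨δ'', hδ''pos, hδ''le, hmodb⟩ := hmod (r / C) (div_pos hr hCpos)
    set δ₁ := min δ'' δ with hδ₁def
    have hN' : volume (N ∪ bad) = 0 := measure_union_null hN hbad
    have hv1 : v ∈ V δ₁ (N ∪ bad) := hv δ₁ (lt_min hδ''pos hδ) (N ∪ bad) hN'
    -- A x v belongs to the closed convex hull of (A x ∘ F) '' S δ₁ (N ∪ bad)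
    have h1 : A x v ∈ closure (convexHull ℝ ((fun y => A x (F y)) '' S δ₁ (N ∪ bad))) := by
      have himg : A x v ∈ (fun u => A x u) '' closure (convexHull ℝ (F '' S δ₁ (N ∪ bad))) :=
        Set.mem_image_of_mem _ hv1
      have h2 := image_closure_subset_closure_image (f := fun u => A x u)
        (A x).continuous (s := convexHull ℝ (F '' S δ₁ (N ∪ bad)))
      have h3 : (fun u => A x u) '' convexHull ℝ (F '' S δ₁ (N ∪ bad)) =
          convexHull ℝ ((fun u => A x u) '' (F '' S δ₁ (N ∪ bad))) :=
        (A x : (EuclideanSpace ℝ (Fin d)) →ₗ[ℝ] (EuclideanSpace ℝ (Fin d))).image_convexHull _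
      have h4 := h2 himg
      rw [h3, Set.image_image] at h4
      exact h4
    have hsub : closure (convexHull ℝ ((fun y => A x (F y)) '' S δ₁ (N ∪ bad))) ⊆
        Metric.cthickening (r / C * C) T := by
      apply approx_subset_cthickening _ _ (fun y => A y (F y)) _ _
        ((convex_convexHull ℝ _).closure)
      · intro y hy
        exact subset_closure (subset_convexHull ℝ _
          (Set.mem_image_of_mem _ (hSmono (min_le_right _ _) Set.subset_union_left hy)))
      · intro y hy
        exact herr _ y (hFle δ₁ (le_trans (min_le_left _ _) hδ''le) N y hy)
          (hmodb y (Metric.mem_ball.mpr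
            (lt_of_lt_of_le (Metric.mem_ball.mp hy.1.1) (min_le_left _ _))))
    have := hsub h1
    rwa [div_mul_cancel₀ r hCpos.ne'] at this
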